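/- Let A ∈ ℝ^{n×n} and B ∈ ℝ^{r×r} both be Hurwitz, and let C ∈ ℝ^{n×r}. Then the integral X := ∫₀^∞ exp(At) C exp(Bt) dt converges, X satisfies the Sylvester equation A X + X B + C = 0, and X is the unique solution of this equation. -/

import Mathlib

open Matrix MeasureTheory NormedSpace


namespace SylvesterAux

variable {m : ℕ}

/-- Decay of `exp (t • M) *ᵥ x` for Hurwitz `M`. -/
lemma vec_decay (M : Matrix (Fin m) (Fin m) ℂ)
    (hM : ∀ μ ∈ spectrum ℂ M, μ.re < 0) (x : Fin m → ℂ) :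
    ∃ ε : ℝ, 0 < ε ∧ ∃ K : ℝ, 0 ≤ K ∧ ∀ t : ℝ, 0 ≤ t →
      ‖exp (t • M) *ᵥ x‖ ≤ K * Real.exp (-ε * t) := by
  letI : SeminormedRing (Matrix (Fin m) (Fin m) ℂ) := Matrix.linftyOpSemiNormedRing
  letI : NormedRing (Matrix (Fin m) (Fin m) ℂ) := Matrix.linftyOpNormedRing
  letI : NormedAlgebra ℂ (Matrix (Fin m) (Fin m) ℂ) := Matrix.linftyOpNormedAlgebra
  letI : NormedAlgebra ℚ (Matrix (Fin m) (Fin m) ℂ) := Matrix.linftyOpNormedAlgebra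
  set f : Module.End ℂ (Fin m → ℂ) := Matrix.toLinAlgEquiv' M with hf
  have hx : x ∈ ⨆ μ : ℂ, f.maxGenEigenspace μ := by
    rw [Module.End.iSup_maxGenEigenspace_eq_top]; trivial
  refine Submodule.iSup_induction (motive := fun x : Fin m → ℂ => ∃ ε : ℝ, 0 < ε ∧ ∃ K : ℝ, 0 ≤ K ∧
      ∀ t : ℝ, 0 ≤ t → ‖exp (t • M) *ᵥ x‖ ≤ K * Real.exp (-ε * t))
      (fun μ : ℂ => f.maxGenEigenspace μ) hx ?_ ?_ ?_
  · -- main case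
    rintro μ x hxμ
    rcases eq_or_ne x 0 with rfl | hx0
    · exact ⟨1, one_pos, 0, le_refl _, fun t ht => by simp⟩
    have hμ : μ.re < 0 := by
      refine hM μ ?_
      rw [← AlgEquiv.spectrum_eq (Matrix.toLinAlgEquiv' (n := Fin m) (R := ℂ)) M]
      obtain ⟨k, hk⟩ := (Module.End.mem_maxGenEigenspace f μ x).mp hxμ
      have : Module.End.HasGenEigenvalue f μ k := by
        intro hbot
        refine hx0 ?_
        have hxk : x ∈ Module.End.genEigenspace f μ (k : ℕ∞) := by
          rw [Module.End.mem_genEigenspace_nat, LinearMap.mem_ker]; exact hk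
        rw [hbot] at hxk
        simpa using hxk
      exact (Module.End.hasEigenvalue_of_hasGenEigenvalue this).mem_spectrum
    obtain ⟨k, hk⟩ := (Module.End.mem_maxGenEigenspace f μ x).mp hxμ
    set N : Matrix (Fin m) (Fin m) ℂ := M - μ • 1 with hN
    have hNk : N ^ k *ᵥ x = 0 := by
      have h1 : f - μ • 1 = Matrix.toLinAlgEquiv' N := by
        rw [hN, map_sub, _root_.map_smul, _root_.map_one]
      have h2 : ((f - μ • 1) ^ k) x = N ^ k *ᵥ x := by
        rw [h1, ← map_pow, Matrix.toLinAlgEquiv'_apply]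
      rw [← h2, hk]
    have hNl : ∀ l, k ≤ l → N ^ l *ᵥ x = 0 := by
      intro l hl
      have : N ^ l = N ^ (l - k) * N ^ k := by rw [← pow_add]; congr 1; omega
      rw [this, ← Matrix.mulVec_mulVec, hNk, Matrix.mulVec_zero]
    set ε : ℝ := -μ.re / 2 with hε
    have hε0 : 0 < ε := by simp [hε]; linarith
    refine ⟨ε, hε0, ∑ l ∈ Finset.range k, ε⁻¹ ^ l * ‖N ^ l *ᵥ x‖, ?_, ?_⟩
    · refine Finset.sum_nonneg fun l _ => ?_
      positivity
    intro t ht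
    have hsplit : exp (t • M) = Complex.exp (t * μ) • exp (t • N) := by
      have h1 : ((t : ℂ) * μ) • (1 : Matrix (Fin m) (Fin m) ℂ)
          = t • (μ • (1 : Matrix (Fin m) (Fin m) ℂ)) := by
        rw [← Complex.real_smul, smul_assoc]
      have hM' : t • M = ((t : ℂ) * μ) • (1 : Matrix (Fin m) (Fin m) ℂ) + t • N := by
        rw [hN, smul_sub, h1]
        abel
      have hcomm : Commute (((t : ℂ) * μ) • (1 : Matrix (Fin m) (Fin m) ℂ)) (t • N) :=
        (Commute.one_left (t • N)).smul_left _
      rw [hM', (show exp (((t : ℂ) * μ) • (1 : Matrix (Fin m) (Fin m) ℂ) + t • N) = exp (((t : ℂ) * μ) • (1 : Matrix (Fin m) (Fin m) ℂ)) * exp (t • N) from NormedSpace.exp_add_of_commute hcomm)]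
      have : exp (((t : ℂ) * μ) • (1 : Matrix (Fin m) (Fin m) ℂ))
          = Complex.exp (t * μ) • (1 : Matrix (Fin m) (Fin m) ℂ) := by
        rw [← Algebra.algebraMap_eq_smul_one]; erw [← algebraMap_exp_comm]
        rw [← Complex.exp_eq_exp_ℂ, ← Algebra.algebraMap_eq_smul_one]
      rw [this, smul_mul_assoc, one_mul]
    have happ : exp (t • N) *ᵥ x
        = ∑ l ∈ Finset.range k, (((t : ℂ) ^ l * ((l.factorial : ℂ))⁻¹)) • (N ^ l *ᵥ x) := by
      have hlm : ∃ L : Matrix (Fin m) (Fin m) ℂ →L[ℂ] (Fin m → ℂ), ∀ W, L W = W *ᵥ x := by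
        refine ⟨LinearMap.toContinuousLinearMap
          { toFun := fun W : Matrix (Fin m) (Fin m) ℂ => W *ᵥ x
            map_add' := fun P Q => Matrix.add_mulVec P Q x
            map_smul' := fun c P => Matrix.smul_mulVec c P x }, fun W => rfl⟩
      obtain ⟨L, hL⟩ := hlm
      rw [exp_eq_tsum ℂ]
      rw [← hL, L.map_tsum (expSeries_summable' (𝕂 := ℂ) (t • N))]
      have hterm : ∀ l : ℕ, L ((l.factorial : ℂ)⁻¹ • (t • N) ^ l)
          = (((t : ℂ) ^ l * ((l.factorial : ℂ))⁻¹)) • (N ^ l *ᵥ x) := by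
        intro l
        have harg : ((l.factorial : ℂ))⁻¹ • (t • N) ^ l
            = (((t : ℂ) ^ l * ((l.factorial : ℂ))⁻¹)) • N ^ l := by
          rw [smul_pow, ← algebraMap_smul ℂ (t ^ l) (N ^ l), smul_smul,
            Complex.coe_algebraMap]
          congr 1
          push_cast
          ring
        rw [harg, _root_.map_smul, hL]
      simp_rw [hterm]
      refine tsum_eq_sum ?_
      intro b hb
      rw [hNl b (by simpa using hb), smul_zero]
    rw [hsplit, Matrix.smul_mulVec, happ]
    rw [norm_smul]
    have habs : ‖Complex.exp (t * μ)‖ = Real.exp (t * μ.re) := by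
      rw [Complex.norm_exp]
      congr 1
      simp
    rw [habs]
    have hsum : ‖∑ l ∈ Finset.range k, (((t : ℂ) ^ l * ((l.factorial : ℂ))⁻¹)) • (N ^ l *ᵥ x)‖
        ≤ ∑ l ∈ Finset.range k, (t ^ l / l.factorial) * ‖N ^ l *ᵥ x‖ := by
      refine (norm_sum_le _ _).trans ?_
      refine Finset.sum_le_sum fun l _ => ?_
      rw [norm_smul]
      gcongr
      have : ‖((t : ℂ) ^ l * ((l.factorial : ℂ))⁻¹)‖ = t ^ l / l.factorial := by
        rw [norm_mul, norm_pow, norm_inv, Complex.norm_real, Complex.norm_natCast,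
          Real.norm_eq_abs, abs_of_nonneg ht, div_eq_mul_inv]
      rw [this]
    calc Real.exp (t * μ.re) * ‖∑ l ∈ Finset.range k, (((t : ℂ) ^ l * ((l.factorial : ℂ))⁻¹)) • (N ^ l *ᵥ x)‖
        ≤ Real.exp (t * μ.re) * ∑ l ∈ Finset.range k, (t ^ l / l.factorial) * ‖N ^ l *ᵥ x‖ := by
          exact mul_le_mul_of_nonneg_left hsum (Real.exp_pos _).le
      _ ≤ Real.exp (t * μ.re) * ∑ l ∈ Finset.range k, (Real.exp (ε * t) * ε⁻¹ ^ l) * ‖N ^ l *ᵥ x‖ := by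
          refine mul_le_mul_of_nonneg_left ?_ (Real.exp_pos _).le
          refine Finset.sum_le_sum fun l _ => ?_
          refine mul_le_mul_of_nonneg_right ?_ (norm_nonneg _)
          have h1 : (ε * t) ^ l / l.factorial ≤ Real.exp (ε * t) :=
            Real.pow_div_factorial_le_exp (ε * t) (mul_nonneg hε0.le ht) l
          have h2 : t ^ l / l.factorial = ((ε * t) ^ l / l.factorial) * ε⁻¹ ^ l := by
            field_simp [mul_pow]
            rw [← mul_pow, mul_right_comm, mul_one_div_cancel hε0.ne', one_mul]
          rw [h2]
          refine mul_le_mul_of_nonneg_right h1 (by positivity)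
      _ = (∑ l ∈ Finset.range k, ε⁻¹ ^ l * ‖N ^ l *ᵥ x‖) * (Real.exp (t * μ.re) * Real.exp (ε * t)) := by
          rw [Finset.mul_sum, Finset.sum_mul]
          refine Finset.sum_congr rfl fun l _ => by ring
      _ = (∑ l ∈ Finset.range k, ε⁻¹ ^ l * ‖N ^ l *ᵥ x‖) * Real.exp (-ε * t) := by
          rw [← Real.exp_add]
          congr 2
          rw [hε]
          ring
  · exact ⟨1, one_pos, 0, le_refl _, fun t ht => by simp⟩
  · rintro y z ⟨ε₁, hε₁, K₁, hK₁, h₁⟩ ⟨ε₂, hε₂, K₂, hK₂, h₂⟩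
    refine ⟨min ε₁ ε₂, lt_min hε₁ hε₂, K₁ + K₂, by linarith, fun t ht => ?_⟩
    rw [Matrix.mulVec_add]
    refine (norm_add_le _ _).trans ?_
    rw [add_mul]
    gcongr
    · refine (h₁ t ht).trans ?_
      gcongr
      · exact min_le_left _ _
    · refine (h₂ t ht).trans ?_
      gcongr
      · exact min_le_right _ _

end SylvesterAux

namespace SylvesterAux2
open SylvesterAux

/-- Combine finitely many exponential decay bounds into a single one. -/
lemma combine {ι : Type*} [Fintype ι] (g : ι → ℝ → ℝ)
    (h : ∀ i, ∃ ε : ℝ, 0 < ε ∧ ∃ K : ℝ, 0 ≤ K ∧ ∀ t : ℝ, 0 ≤ t →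
      g i t ≤ K * Real.exp (-ε * t)) :
    ∃ ε : ℝ, 0 < ε ∧ ∃ K : ℝ, 0 ≤ K ∧ ∀ t : ℝ, 0 ≤ t → ∀ i,
      g i t ≤ K * Real.exp (-ε * t) := by
  cases isEmpty_or_nonempty ι with
  | inl hempty => exact ⟨1, one_pos, 0, le_refl _, fun t ht i => (hempty.false i).elim⟩
  | inr hne =>
    choose εf hεf Kf hKf hbound using h
    refine ⟨Finset.univ.inf' Finset.univ_nonempty εf, ?_, Finset.univ.sup' Finset.univ_nonempty Kf, ?_, ?_⟩
    · rw [Finset.lt_inf'_iff]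
      exact fun i _ => hεf i
    · obtain ⟨i0⟩ := hne
      exact (hKf i0).trans (Finset.le_sup' Kf (Finset.mem_univ i0))
    · intro t ht i
      refine (hbound i t ht).trans ?_
      have h1 : Kf i ≤ Finset.univ.sup' Finset.univ_nonempty Kf :=
        Finset.le_sup' Kf (Finset.mem_univ i)
      have h2 : Real.exp (-εf i * t) ≤ Real.exp (-(Finset.univ.inf' Finset.univ_nonempty εf) * t) := by
        refine Real.exp_le_exp.mpr ?_
        refine mul_le_mul_of_nonneg_right (neg_le_neg ?_) ht
        exact Finset.inf'_le εf (Finset.mem_univ i)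
      exact mul_le_mul h1 h2 (Real.exp_pos _).le
        ((hKf i).trans h1)

variable {m : ℕ}

/-- Entrywise decay for the complex matrix exponential of a Hurwitz matrix. -/
lemma entry_decay (M : Matrix (Fin m) (Fin m) ℂ)
    (hM : ∀ μ ∈ spectrum ℂ M, μ.re < 0) :
    ∃ ε : ℝ, 0 < ε ∧ ∃ K : ℝ, 0 ≤ K ∧ ∀ t : ℝ, 0 ≤ t → ∀ i j : Fin m,
      ‖exp (t • M) i j‖ ≤ K * Real.exp (-ε * t) := by
  have h := combine (ι := Fin m × Fin m) (fun p t => ‖exp (t • M) p.1 p.2‖) ?_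
  · obtain ⟨ε, hε, K, hK, hb⟩ := h
    exact ⟨ε, hε, K, hK, fun t ht i j => hb t ht (i, j)⟩
  rintro ⟨i, j⟩
  obtain ⟨ε, hε, K, hK, hb⟩ := vec_decay M hM (Pi.single j 1)
  refine ⟨ε, hε, K, hK, fun t ht => ?_⟩
  refine le_trans ?_ (hb t ht)
  have h0 : exp (t • M) i j = (exp (t • M) *ᵥ Pi.single j 1) i := by
    rw [Matrix.mulVec_single_one]
    rfl
  show ‖exp (t • M) i j‖ ≤ _
  rw [h0]
  exact norm_le_pi_norm _ i

/-- The real matrix exponential maps to the complex one. -/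
lemma exp_map_ofReal (A : Matrix (Fin m) (Fin m) ℝ) (t : ℝ) :
    (exp (t • A)).map (Complex.ofReal ·) = exp (t • A.map (Complex.ofReal ·)) := by
  letI : SeminormedRing (Matrix (Fin m) (Fin m) ℝ) := Matrix.linftyOpSemiNormedRing
  letI : NormedRing (Matrix (Fin m) (Fin m) ℝ) := Matrix.linftyOpNormedRing
  letI : NormedAlgebra ℝ (Matrix (Fin m) (Fin m) ℝ) := Matrix.linftyOpNormedAlgebra
  letI : SeminormedRing (Matrix (Fin m) (Fin m) ℂ) := Matrix.linftyOpSemiNormedRing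
  letI : NormedRing (Matrix (Fin m) (Fin m) ℂ) := Matrix.linftyOpNormedRing
  letI : NormedAlgebra ℝ (Matrix (Fin m) (Fin m) ℂ) := Matrix.linftyOpNormedAlgebra
  letI : NormedAlgebra ℂ (Matrix (Fin m) (Fin m) ℂ) := Matrix.linftyOpNormedAlgebra
  letI : NormedAlgebra ℚ (Matrix (Fin m) (Fin m) ℝ) := Matrix.linftyOpNormedAlgebra
  have hcont : Continuous (fun P : Matrix (Fin m) (Fin m) ℝ =>
      (Complex.ofRealHom.mapMatrix : Matrix (Fin m) (Fin m) ℝ →+* Matrix (Fin m) (Fin m) ℂ) P) :=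
    Continuous.matrix_map continuous_id Complex.continuous_ofReal
  have h1 := map_exp (Complex.ofRealHom.mapMatrix
      (m := Fin m)) hcont (t • A)
  have h2 : Complex.ofRealHom.mapMatrix (t • A) = t • A.map (Complex.ofReal ·) := by
    ext i j
    simp [Matrix.map_apply, Matrix.smul_apply, Complex.ofReal_mul]
  have h3 : (exp (t • A)).map (Complex.ofReal ·)
      = Complex.ofRealHom.mapMatrix (exp (t • A)) := rfl
  rw [h3]; exact h1.trans (congrArg _ h2)

/-- Entrywise decay for the real matrix exponential of a Hurwitz matrix. -/
lemma real_entry_decay (A : Matrix (Fin m) (Fin m) ℝ)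
    (hA : ∀ μ ∈ spectrum ℂ (A.map (Complex.ofReal ·)), μ.re < 0) :
    ∃ ε : ℝ, 0 < ε ∧ ∃ K : ℝ, 0 ≤ K ∧ ∀ t : ℝ, 0 ≤ t → ∀ i j : Fin m,
      |exp (t • A) i j| ≤ K * Real.exp (-ε * t) := by
  obtain ⟨ε, hε, K, hK, hb⟩ := entry_decay (A.map (Complex.ofReal ·)) hA
  refine ⟨ε, hε, K, hK, fun t ht i j => ?_⟩
  have h1 : ((exp (t • A)).map (Complex.ofReal ·)) i j = exp (t • A.map (Complex.ofReal ·)) i j := by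
    rw [exp_map_ofReal]
  have h2 : ((exp (t • A)).map (Complex.ofReal ·)) i j = ((exp (t • A) i j : ℝ) : ℂ) := rfl
  have := hb t ht i j
  rw [← h1, h2, Complex.norm_real, Real.norm_eq_abs] at this
  exact this

/-- Entrywise derivative of the matrix exponential. -/
lemma hasDerivAt_exp_entry (A : Matrix (Fin m) (Fin m) ℝ) (t : ℝ) (i j : Fin m) :
    HasDerivAt (fun s : ℝ => exp (s • A) i j) ((A * exp (t • A)) i j) t := by
  letI : SeminormedRing (Matrix (Fin m) (Fin m) ℝ) := Matrix.linftyOpSemiNormedRing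
  letI : NormedRing (Matrix (Fin m) (Fin m) ℝ) := Matrix.linftyOpNormedRing
  letI : NormedAlgebra ℝ (Matrix (Fin m) (Fin m) ℝ) := Matrix.linftyOpNormedAlgebra
  have h := hasDerivAt_exp_smul_const' (𝕂 := ℝ) A t
  let E : Matrix (Fin m) (Fin m) ℝ →L[ℝ] ℝ := LinearMap.toContinuousLinearMap
    { toFun := fun W : Matrix (Fin m) (Fin m) ℝ => W i j
      map_add' := fun P Q => rfl
      map_smul' := fun c P => rfl }
  exact E.hasFDerivAt.comp_hasDerivAt t h

/-- Entrywise derivative of a product of matrix-valued functions. -/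
lemma hasDerivAt_entry_mul {a b c : ℕ} {U : ℝ → Matrix (Fin a) (Fin b) ℝ}
    {V : ℝ → Matrix (Fin b) (Fin c) ℝ} {U' : Matrix (Fin a) (Fin b) ℝ}
    {V' : Matrix (Fin b) (Fin c) ℝ} {t : ℝ}
    (hU : ∀ i j, HasDerivAt (fun s => U s i j) (U' i j) t)
    (hV : ∀ i j, HasDerivAt (fun s => V s i j) (V' i j) t)
    (i : Fin a) (j : Fin c) :
    HasDerivAt (fun s => (U s * V s) i j) ((U' * V t + U t * V') i j) t := by
  simp only [Matrix.mul_apply, Matrix.add_apply]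
  rw [← Finset.sum_add_distrib]
  exact HasDerivAt.fun_sum fun k _ => ((hU i k).mul (hV k j))

end SylvesterAux2

namespace SylvesterAux2
variable {m : ℕ}

/-- `exp (t • A)` commutes with `A`. -/
lemma exp_comm (A : Matrix (Fin m) (Fin m) ℝ) (t : ℝ) :
    exp (t • A) * A = A * exp (t • A) := by
  letI : SeminormedRing (Matrix (Fin m) (Fin m) ℝ) := Matrix.linftyOpSemiNormedRing
  letI : NormedRing (Matrix (Fin m) (Fin m) ℝ) := Matrix.linftyOpNormedRing
  letI : NormedAlgebra ℝ (Matrix (Fin m) (Fin m) ℝ) := Matrix.linftyOpNormedAlgebra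
  exact (((Commute.refl A).smul_left t).exp_left).eq

end SylvesterAux2

attribute [local instance] Matrix.normedAddCommGroup Matrix.normedSpace

/-- For Hurwitz matrices `A` and `B`, the integral `X = ∫₀^∞ exp(At) C exp(Bt) dt`
converges, satisfies the Sylvester equation `A X + X B + C = 0`, and is its unique
solution. -/
theorem sylvester_solution_integral {n r : ℕ}
    (A : Matrix (Fin n) (Fin n) ℝ) (B : Matrix (Fin r) (Fin r) ℝ)
    (C : Matrix (Fin n) (Fin r) ℝ)
    (hA : ∀ μ ∈ spectrum ℂ (A.map (Complex.ofReal ·)), μ.re < 0)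
    (hB : ∀ μ ∈ spectrum ℂ (B.map (Complex.ofReal ·)), μ.re < 0) :
    @IntegrableOn _ _ _ _ SeminormedAddGroup.toContinuousENorm
      (fun t : ℝ => NormedSpace.exp (t • A) * C * NormedSpace.exp (t • B)) (Set.Ioi 0) volume ∧
    A * (∫ t : ℝ in Set.Ioi 0, NormedSpace.exp (t • A) * C * NormedSpace.exp (t • B)) +
      (∫ t : ℝ in Set.Ioi 0, NormedSpace.exp (t • A) * C * NormedSpace.exp (t • B)) * B + C = 0 ∧
    ∀ X' : Matrix (Fin n) (Fin r) ℝ, A * X' + X' * B + C = 0 →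
      X' = ∫ t : ℝ in Set.Ioi 0, NormedSpace.exp (t • A) * C * NormedSpace.exp (t • B) := by
  obtain ⟨εA, hεA, KA, hKA, hbA⟩ := SylvesterAux2.real_entry_decay A hA
  obtain ⟨εB, hεB, KB, hKB, hbB⟩ := SylvesterAux2.real_entry_decay B hB
  set F : Matrix (Fin n) (Fin r) ℝ → ℝ → Matrix (Fin n) (Fin r) ℝ :=
    fun W t => exp (t • A) * W * exp (t • B) with hFdef
  set ε : ℝ := εA + εB with hε
  have hε0 : 0 < ε := by positivity
  -- norm bound
  have hbound : ∀ (W : Matrix (Fin n) (Fin r) ℝ) (t : ℝ), 0 ≤ t →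
      ‖F W t‖ ≤ (n : ℝ) * (r : ℝ) * KA * KB * ‖W‖ * Real.exp (-ε * t) := by
    intro W t ht
    have hRHS : 0 ≤ (n : ℝ) * (r : ℝ) * KA * KB * ‖W‖ * Real.exp (-ε * t) := by positivity
    rw [Matrix.norm_le_iff hRHS]
    intro i j
    have hPW : ∀ l : Fin r, |(exp (t • A) * W) i l|
        ≤ (n : ℝ) * KA * ‖W‖ * Real.exp (-εA * t) := by
      intro l
      rw [Matrix.mul_apply]
      refine (Finset.abs_sum_le_sum_abs _ _).trans ?_
      have : ∀ k ∈ Finset.univ, |exp (t • A) i k * W k l|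
          ≤ (KA * Real.exp (-εA * t)) * ‖W‖ := by
        intro k _
        rw [abs_mul]
        refine mul_le_mul (hbA t ht i k) ?_ (abs_nonneg _) (by positivity)
        simpa [Real.norm_eq_abs] using Matrix.norm_entry_le_entrywise_sup_norm (A := W) (i := k) (j := l)
      refine (Finset.sum_le_sum this).trans ?_
      rw [Finset.sum_const, Finset.card_univ, Fintype.card_fin, nsmul_eq_mul]
      ring_nf
      exact le_of_eq (by ring)
    have hQe : ∀ l : Fin r, |exp (t • B) l j| ≤ KB * Real.exp (-εB * t) :=
      fun l => hbB t ht l j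
    have hentry : (F W t) i j = ∑ l : Fin r, (exp (t • A) * W) i l * exp (t • B) l j := by
      simp [hFdef, Matrix.mul_apply]
    rw [show ‖(F W t) i j‖ = |(F W t) i j| from rfl, hentry]
    refine (Finset.abs_sum_le_sum_abs _ _).trans ?_
    have : ∀ l ∈ Finset.univ, |(exp (t • A) * W) i l * exp (t • B) l j|
        ≤ ((n : ℝ) * KA * ‖W‖ * Real.exp (-εA * t)) * (KB * Real.exp (-εB * t)) := by
      intro l _
      rw [abs_mul]
      exact mul_le_mul (hPW l) (hQe l) (abs_nonneg _) (by positivity)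
    refine (Finset.sum_le_sum this).trans ?_
    rw [Finset.sum_const, Finset.card_univ, Fintype.card_fin, nsmul_eq_mul]
    rw [hε, show (-(εA + εB) * t) = (-εA * t) + (-εB * t) by ring, Real.exp_add]
    exact le_of_eq (by ring)
  -- derivative
  have hFderiv : ∀ (W : Matrix (Fin n) (Fin r) ℝ) (t : ℝ),
      HasDerivAt (F W) (A * F W t + F W t * B) t := by
    intro W t
    have hPd : ∀ (i j : Fin n), HasDerivAt (fun s : ℝ => exp (s • A) i j)
        ((A * exp (t • A)) i j) t := SylvesterAux2.hasDerivAt_exp_entry A t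
    have hQd : ∀ (i j : Fin r), HasDerivAt (fun s : ℝ => exp (s • B) i j)
        ((B * exp (t • B)) i j) t := SylvesterAux2.hasDerivAt_exp_entry B t
    have hWd : ∀ (i : Fin n) (j : Fin r), HasDerivAt (fun _ : ℝ => W i j)
        ((0 : Matrix (Fin n) (Fin r) ℝ) i j) t := by
      intro i j
      simpa using hasDerivAt_const t (W i j)
    have h1 : ∀ (i : Fin n) (j : Fin r),
        HasDerivAt (fun s : ℝ => (exp (s • A) * W) i j)
          ((A * exp (t • A) * W + exp (t • A) * (0 : Matrix (Fin n) (Fin r) ℝ)) i j) t :=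
      fun i j => SylvesterAux2.hasDerivAt_entry_mul hPd hWd i j
    have h2 : ∀ (i : Fin n) (j : Fin r),
        HasDerivAt (fun s : ℝ => (exp (s • A) * W * exp (s • B)) i j)
          (((A * exp (t • A) * W + exp (t • A) * (0 : Matrix (Fin n) (Fin r) ℝ)) * exp (t • B)
            + (exp (t • A) * W) * (B * exp (t • B))) i j) t :=
      fun i j => SylvesterAux2.hasDerivAt_entry_mul h1 hQd i j
    have heq : (A * exp (t • A) * W + exp (t • A) * (0 : Matrix (Fin n) (Fin r) ℝ)) * exp (t • B)
          + (exp (t • A) * W) * (B * exp (t • B))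
        = A * F W t + F W t * B := by
      rw [Matrix.mul_zero, add_zero, hFdef]
      have hcB : B * exp (t • B) = exp (t • B) * B :=
        (SylvesterAux2.exp_comm B t).symm
      rw [hcB]
      simp only [Matrix.mul_assoc]
    rw [← heq]
    exact hasDerivAt_pi.mpr fun i => hasDerivAt_pi.mpr fun j => h2 i j
  have hFcont : ∀ W, Continuous (F W) := fun W =>
    continuous_iff_continuousAt.mpr fun t => (hFderiv W t).continuousAt
  -- integrability
  have hFint : ∀ W, @IntegrableOn _ _ _ _ SeminormedAddGroup.toContinuousENorm (F W) (Set.Ioi 0) volume := by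
    intro W
    haveI : TopologicalSpace.PseudoMetrizableSpace (Matrix (Fin n) (Fin r) ℝ) :=
      inferInstanceAs (TopologicalSpace.PseudoMetrizableSpace (Fin n → Fin r → ℝ))
    have hgint : IntegrableOn
        (fun t : ℝ => (n : ℝ) * (r : ℝ) * KA * KB * ‖W‖ * Real.exp (-ε * t))
        (Set.Ioi 0) :=
      (exp_neg_integrableOn_Ioi 0 hε0).const_mul _
    refine Integrable.mono' hgint ((hFcont W).aestronglyMeasurable) ?_
    filter_upwards [ae_restrict_mem measurableSet_Ioi] with t ht
    exact hbound W t ht.le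
  -- tendsto 0 at top
  have hFtend : ∀ W, Filter.Tendsto (F W) Filter.atTop (nhds 0) := by
    intro W
    refine squeeze_zero_norm'
      (a := fun t : ℝ => (n : ℝ) * (r : ℝ) * KA * KB * ‖W‖ * Real.exp (-ε * t)) ?_ ?_
    · filter_upwards [Filter.eventually_ge_atTop (0 : ℝ)] with t ht
      exact hbound W t ht
    · have h1 : Filter.Tendsto (fun t : ℝ => ε * t) Filter.atTop Filter.atTop :=
        Filter.Tendsto.const_mul_atTop hε0 Filter.tendsto_id
      have h2 := Real.tendsto_exp_neg_atTop_nhds_zero.comp h1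
      have h3 := h2.const_mul ((n : ℝ) * (r : ℝ) * KA * KB * ‖W‖)
      simpa [neg_mul, Function.comp, mul_comm] using h3
  -- CLMs for left and right multiplication
  let L : Matrix (Fin n) (Fin r) ℝ →L[ℝ] Matrix (Fin n) (Fin r) ℝ :=
    LinearMap.toContinuousLinearMap
      { toFun := fun Y : Matrix (Fin n) (Fin r) ℝ => A * Y
        map_add' := fun Y Z => Matrix.mul_add A Y Z
        map_smul' := fun c Y => (Matrix.mul_smul A c Y) }
  let R : Matrix (Fin n) (Fin r) ℝ →L[ℝ] Matrix (Fin n) (Fin r) ℝ :=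
    LinearMap.toContinuousLinearMap
      { toFun := fun Y : Matrix (Fin n) (Fin r) ℝ => Y * B
        map_add' := fun Y Z => Matrix.add_mul Y Z B
        map_smul' := fun c Y => (Matrix.smul_mul c Y B) }
  have hLapp : ∀ Y, L Y = A * Y := fun Y => rfl
  have hRapp : ∀ Y, R Y = Y * B := fun Y => rfl
  have hf'int : ∀ W, @IntegrableOn _ _ _ _ SeminormedAddGroup.toContinuousENorm (fun t => A * F W t + F W t * B) (Set.Ioi 0) volume := by
    intro W
    have h1 : @Integrable _ _ SeminormedAddGroup.toContinuousENorm _ _ (fun t => L (F W t)) (volume.restrict (Set.Ioi 0)) :=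
      L.integrable_comp (hFint W)
    have h2 : @Integrable _ _ SeminormedAddGroup.toContinuousENorm _ _ (fun t => R (F W t)) (volume.restrict (Set.Ioi 0)) :=
      R.integrable_comp (hFint W)
    exact h1.add h2
  -- fundamental theorem of calculus
  have hkey : ∀ W, ∫ t in Set.Ioi 0, (A * F W t + F W t * B) = -W := by
    intro W
    have h0 : F W 0 = W := by
      simp [hFdef]
    have := integral_Ioi_of_hasDerivAt_of_tendsto
      (f := F W) (f' := fun t => A * F W t + F W t * B) (a := 0) (m := 0)
      ((hFcont W).continuousWithinAt)
      (fun x _ => hFderiv W x) (hf'int W) (hFtend W)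
    rw [h0] at this
    rw [this, zero_sub]
  have hsplit : ∀ W, ∫ t in Set.Ioi 0, (A * F W t + F W t * B)
      = A * (∫ t in Set.Ioi 0, F W t) + (∫ t in Set.Ioi 0, F W t) * B := by
    intro W
    have h1 : @Integrable _ _ SeminormedAddGroup.toContinuousENorm _ _ (fun t => L (F W t)) (volume.restrict (Set.Ioi 0)) :=
      L.integrable_comp (hFint W)
    have h2 : @Integrable _ _ SeminormedAddGroup.toContinuousENorm _ _ (fun t => R (F W t)) (volume.restrict (Set.Ioi 0)) :=
      R.integrable_comp (hFint W)
    have e1 : ∫ t in Set.Ioi 0, (A * F W t + F W t * B)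
        = (∫ t in Set.Ioi 0, L (F W t)) + ∫ t in Set.Ioi 0, R (F W t) := by
      rw [← integral_add h1 h2]
      simp [hLapp, hRapp]
    rw [e1]; erw [L.integral_comp_comm (hFint W), R.integral_comp_comm (hFint W)]; rfl
  have hXeq : A * (∫ t in Set.Ioi 0, F C t) + (∫ t in Set.Ioi 0, F C t) * B = -C := by
    rw [← hsplit C]
    exact hkey C
  refine ⟨hFint C, ?_, ?_⟩
  · rw [show (∫ t : ℝ in Set.Ioi 0, exp (t • A) * C * exp (t • B))
      = ∫ t in Set.Ioi 0, F C t from rfl]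
    rw [hXeq]
    exact neg_add_cancel C
  · intro X' hX'
    have hX2 : A * X' + X' * B = -C := by
      have := hX'
      linear_combination (norm := module) this
    have hcA : ∀ t : ℝ, A * exp (t • A) = exp (t • A) * A :=
      fun t => (SylvesterAux2.exp_comm A t).symm
    have hcB : ∀ t : ℝ, exp (t • B) * B = B * exp (t • B) :=
      fun t => SylvesterAux2.exp_comm B t
    have hpt : ∀ t : ℝ, A * F X' t + F X' t * B = -(F C t) := by
      intro t
      have e1 : A * F X' t = exp (t • A) * (A * X') * exp (t • B) := by
        rw [hFdef]
        rw [← Matrix.mul_assoc, ← Matrix.mul_assoc, hcA t,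
          Matrix.mul_assoc (exp (t • A)) A X']
      have e2 : F X' t * B = exp (t • A) * (X' * B) * exp (t • B) := by
        rw [hFdef]
        show exp (t • A) * X' * exp (t • B) * B = _
        rw [Matrix.mul_assoc (exp (t • A) * X') (exp (t • B)) B, hcB t,
          ← Matrix.mul_assoc (exp (t • A) * X') B (exp (t • B)),
          Matrix.mul_assoc (exp (t • A)) X' B]
      rw [e1, e2, ← Matrix.add_mul, ← Matrix.mul_add, hX2]
      rw [hFdef]
      simp [Matrix.neg_mul, Matrix.mul_neg]
    have h1 : ∫ t in Set.Ioi 0, (A * F X' t + F X' t * B)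
        = ∫ t in Set.Ioi 0, -(F C t) := by
      exact integral_congr_ae (Filter.Eventually.of_forall fun t => hpt t)
    have h2 : ∫ t in Set.Ioi 0, -(F C t) = -∫ t in Set.Ioi 0, F C t := integral_neg _
    have h3 := hkey X'
    rw [h1, h2] at h3
    exact (neg_inj.mp h3).symm
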